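/- (Uniform state bound from a bounded forcing term.) Let k_ap > 0, k_ad > 0, and let e, e_d : [0,∞) → ℝ be differentiable with ė = e_d, ė_d = −k_ap e − k_ad e_d + e_f(t), e(0) = 0, e_d(0) = 0, where e_f is continuous and sup_{t≥0} |e_f(t)| < ∞. Then for all t ≥ 0: ‖(e(t), e_d(t))‖ ≤ γ₄ · sup_{s≥0} |e_f(s)|, where γ₄ = max{1/k_ap, (1 + k_ap)/(k_ad k_ap)} · λ_max(P₂)/λ_min(P₂) and P₂ = [[(1 + k_ap)/(2k_ad) + k_ad/(2k_ap), 1/(2k_ap)], [1/(2k_ap), (1 + k_ap)/(2k_ad k_ap)]]. -/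

import Mathlib

open Matrix

private lemma aux_quad_low (p11 p12 p22 L U : ℝ) (hp12pos : 0 < p12)
    (hsum : L + U = p11 + p22) (hprod : L * U = p11 * p22 - p12 ^ 2) (hLleU : L ≤ U) :
    ∀ x y : ℝ, L * (x ^ 2 + y ^ 2) ≤ p11 * x ^ 2 + 2 * p12 * (x * y) + p22 * y ^ 2 := by
  intro x y
  have ha : (p11 - L) * (p22 - L) = p12 ^ 2 := by linear_combination - hprod + L * hsum
  rcases eq_or_lt_of_le hLleU with hEq | hLt
  · exfalso
    have hsum0 : (p11 - L) + (p22 - L) = 0 := by rw [hEq] at hsum ⊢; linarith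
    have h5 : (p11 - L) ^ 2 + (p11 - L) * (p22 - L) = 0 := by
      linear_combination (p11 - L) * hsum0
    nlinarith [ha, h5, sq_nonneg (p11 - L), hp12pos]
  · have key : (U - L) * ((p11 * x ^ 2 + 2 * p12 * (x * y) + p22 * y ^ 2) - L * (x ^ 2 + y ^ 2))
        = ((p11 - L) * x + p12 * y) ^ 2 + (p12 * x + (p22 - L) * y) ^ 2 := by
      linear_combination (x ^ 2 + y ^ 2) * ha
        + ((p11 * x ^ 2 + 2 * p12 * (x * y) + p22 * y ^ 2) - L * (x ^ 2 + y ^ 2)) * hsum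
    nlinarith [key, sq_nonneg ((p11 - L) * x + p12 * y), sq_nonneg (p12 * x + (p22 - L) * y), hLt]

private lemma aux_quad_up (p11 p12 p22 L U : ℝ) (hp12pos : 0 < p12)
    (hsum : L + U = p11 + p22) (hprod : L * U = p11 * p22 - p12 ^ 2) (hLleU : L ≤ U) :
    ∀ x y : ℝ, p11 * x ^ 2 + 2 * p12 * (x * y) + p22 * y ^ 2 ≤ U * (x ^ 2 + y ^ 2) := by
  intro x y
  have ha : (U - p11) * (U - p22) = p12 ^ 2 := by linear_combination - hprod + U * hsum
  rcases eq_or_lt_of_le hLleU with hEq | hLt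
  · exfalso
    have hsum0 : (U - p11) + (U - p22) = 0 := by rw [hEq] at hsum; linarith
    have h5 : (U - p11) ^ 2 + (U - p11) * (U - p22) = 0 := by
      linear_combination (U - p11) * hsum0
    nlinarith [ha, h5, sq_nonneg (U - p11), hp12pos]
  · have key : (U - L) * (U * (x ^ 2 + y ^ 2) - (p11 * x ^ 2 + 2 * p12 * (x * y) + p22 * y ^ 2))
        = ((U - p11) * x - p12 * y) ^ 2 + (p12 * x - (U - p22) * y) ^ 2 := by
      linear_combination (x ^ 2 + y ^ 2) * ha
        - (U * (x ^ 2 + y ^ 2) - (p11 * x ^ 2 + 2 * p12 * (x * y) + p22 * y ^ 2)) * hsum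
    nlinarith [key, sq_nonneg ((U - p11) * x - p12 * y), sq_nonneg (p12 * x - (U - p22) * y), hLt]

private lemma aux_invariant (V g : ℝ → ℝ) (C : ℝ) (hC : 0 ≤ C) (hV0 : V 0 ≤ C)
    (hV : ∀ s : ℝ, 0 ≤ s → HasDerivAt V (g s) s)
    (hcond : ∀ s : ℝ, 0 ≤ s → C ≤ V s → g s ≤ 0) :
    ∀ t : ℝ, 0 ≤ t → V t ≤ C := by
  have hVcont : ContinuousOn V (Set.Ici 0) :=
    fun s hs => ((hV s hs).continuousAt.continuousWithinAt)
  intro t ht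
  by_contra hVt
  push_neg at hVt
  set A : Set ℝ := Set.Icc 0 t ∩ V ⁻¹' Set.Iic C with hAdef
  have hA0 : (0:ℝ) ∈ A := ⟨⟨le_rfl, ht⟩, by simp [Set.mem_preimage, hV0]⟩
  have hclosed : IsClosed A :=
    (hVcont.mono Set.Icc_subset_Ici_self).preimage_isClosed_of_isClosed
      isClosed_Icc isClosed_Iic
  have hcomp : IsCompact A :=
    isCompact_Icc.of_isClosed_subset hclosed Set.inter_subset_left
  have hbdd : BddAbove A := ⟨t, fun s hs => hs.1.2⟩
  set t0 : ℝ := sSup A with ht0def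
  have ht0mem : t0 ∈ A := hcomp.sSup_mem ⟨0, hA0⟩
  have ht00 : 0 ≤ t0 := ht0mem.1.1
  have ht0t : t0 ≤ t := ht0mem.1.2
  have hVt0 : V t0 ≤ C := ht0mem.2
  have ht0lt : t0 < t := by
    rcases lt_or_eq_of_le ht0t with h | h
    · exact h
    · exact absurd (h ▸ hVt0) (not_le.2 hVt)
  have hgt : ∀ s : ℝ, t0 < s → s ≤ t → C < V s := by
    intro s h1 h2
    by_contra hle
    push_neg at hle
    have hsA : s ∈ A := ⟨⟨le_trans ht00 h1.le, h2⟩, hle⟩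
    exact absurd (le_csSup hbdd hsA) (not_le.2 h1)
  have hanti : AntitoneOn V (Set.Icc t0 t) := by
    apply antitoneOn_of_deriv_nonpos (convex_Icc t0 t)
    · exact hVcont.mono (Set.Icc_subset_Ici_self.trans (Set.Ici_subset_Ici.2 ht00))
    · intro x hx
      rw [interior_Icc] at hx
      exact ((hV x (le_trans ht00 hx.1.le)).differentiableAt).differentiableWithinAt
    · intro x hx
      rw [interior_Icc] at hx
      have hx0 : 0 ≤ x := le_trans ht00 hx.1.le
      rw [(hV x hx0).deriv]
      exact hcond x hx0 (hgt x hx.1 hx.2.le).le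
  have : V t ≤ V t0 := hanti ⟨le_rfl, ht0t⟩ ⟨ht0t, le_rfl⟩ ht0t
  linarith

private lemma aux_b2L (b2 p22 M L U : ℝ) (hb2pos : 0 < b2) (hp22pos : 0 < p22)
    (hp22M : p22 ≤ M) (hLpos : 0 < L) (hLleU : L ≤ U)
    (hkey : 4 * (L * U) * b2 ≤ p22 ^ 2 * (L + U) ^ 2) :
    b2 * L ≤ M ^ 2 * U := by
  have hUpos : 0 < U := lt_of_lt_of_le hLpos hLleU
  have hTpos : 0 < L + U := by linarith
  have c1 : L * (L + U) ≤ 2 * (L * U) := by nlinarith [hLpos, hLleU]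
  have s1 : (b2 * (L * (L + U))) * (2 * (L + U)) ≤ (b2 * (2 * (L * U))) * (2 * (L + U)) :=
    mul_le_mul_of_nonneg_right (mul_le_mul_of_nonneg_left c1 hb2pos.le) (by linarith)
  have s3 : (4 * (L * U) * b2) * (L + U) ≤ (p22 ^ 2 * (L + U) ^ 2) * (L + U) :=
    mul_le_mul_of_nonneg_right hkey (by linarith)
  have s4 : (p22 ^ 2 * (L + U) ^ 2) * (L + U) ≤ (p22 ^ 2 * (L + U) ^ 2) * (2 * U) :=
    mul_le_mul_of_nonneg_left (by linarith) (by positivity)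
  have hM2 : p22 ^ 2 ≤ M ^ 2 := by nlinarith [hp22pos, hp22M]
  have s5 : (p22 ^ 2 * (L + U) ^ 2) * (2 * U) ≤ (M ^ 2 * (L + U) ^ 2) * (2 * U) :=
    mul_le_mul_of_nonneg_right (mul_le_mul_of_nonneg_right hM2 (sq_nonneg _)) (by linarith)
  have c2 : 2 * (b2 * L) * (L + U) ^ 2 ≤ 2 * (M ^ 2 * U) * (L + U) ^ 2 := by nlinarith [s1, s3, s4, s5]
  have hpos : 0 < 2 * (L + U) ^ 2 := by positivity
  nlinarith [c2, hpos]

private lemma aux_fin (L U C b2 M m S X : ℝ) (hLpos : 0 < L) (hUpos : 0 < U)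
    (hS0 : 0 ≤ S) (hMpos : 0 < M) (hm : m = 2 * M) (hC : C = U * (4 * b2 * S ^ 2))
    (hb2L : b2 * L ≤ M ^ 2 * U) (hLX : L * X ≤ C) (hX0 : 0 ≤ X) :
    Real.sqrt X ≤ m * U / L * S := by
  have hmpos : 0 < m := by rw [hm]; linarith
  have hγ0 : 0 ≤ m * U / L * S :=
    mul_nonneg (div_nonneg (mul_nonneg hmpos.le hUpos.le) hLpos.le) hS0
  have hfin : X ≤ (m * U / L * S) ^ 2 := by
    rw [div_mul_eq_mul_div, div_pow, le_div_iff₀ (pow_pos hLpos 2)]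
    have h1 : L * (L * X) ≤ L * C := mul_le_mul_of_nonneg_left hLX hLpos.le
    have h2 : L * C = 4 * (b2 * L) * (U * S ^ 2) := by rw [hC]; ring
    have h3 : 4 * (b2 * L) * (U * S ^ 2) ≤ 4 * (M ^ 2 * U) * (U * S ^ 2) := by
      apply mul_le_mul_of_nonneg_right _ (mul_nonneg hUpos.le (sq_nonneg S))
      linarith [hb2L]
    have h4 : 4 * (M ^ 2 * U) * (U * S ^ 2) = (m * U * S) ^ 2 := by rw [hm]; ring
    nlinarith [h1, h2, h3, h4]
  calc Real.sqrt X ≤ Real.sqrt ((m * U / L * S) ^ 2) := Real.sqrt_le_sqrt hfin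
    _ = m * U / L * S := Real.sqrt_sq hγ0

set_option maxHeartbeats 1600000 in
/-- **Uniform state bound from a bounded forcing term.**
For `ė = e_d`, `ė_d = −k_ap e − k_ad e_d + e_f(t)` with zero initial data and
`S = sup_{t ≥ 0} |e_f(t)|` finite, one has for all `t ≥ 0`:
`‖(e(t), e_d(t))‖ ≤ γ₄·S` with `γ₄ = max{1/k_ap, (1 + k_ap)/(k_ad k_ap)}·λ_max(P₂)/λ_min(P₂)`,
where `λ_min(P₂)`, `λ_max(P₂)` are the smallest and largest eigenvalues of `P₂`. -/
theorem uniform_state_bound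
    (kap kad : ℝ) (hkap : 0 < kap) (hkad : 0 < kad)
    (P2 : Matrix (Fin 2) (Fin 2) ℝ)
    (hP2 : P2 = !![(1 + kap) / (2 * kad) + kad / (2 * kap), 1 / (2 * kap);
                   1 / (2 * kap), (1 + kap) / (2 * kad * kap)])
    (hP2herm : P2.IsHermitian)
    (e ed ef : ℝ → ℝ) (S : ℝ)
    (hef : ContinuousOn ef (Set.Ici 0))
    (hS : IsLUB {y : ℝ | ∃ t ≥ (0:ℝ), y = |ef t|} S)
    (he : ∀ t ≥ (0:ℝ), HasDerivAt e (ed t) t)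
    (hed : ∀ t ≥ (0:ℝ), HasDerivAt ed (-kap * e t - kad * ed t + ef t) t)
    (he0 : e 0 = 0) (hed0 : ed 0 = 0) :
    ∀ t ≥ (0:ℝ),
      Real.sqrt ((e t) ^ 2 + (ed t) ^ 2)
        ≤ (max (1 / kap) ((1 + kap) / (kad * kap))
            * (Finset.univ.sup' Finset.univ_nonempty hP2herm.eigenvalues)
            / (Finset.univ.inf' Finset.univ_nonempty hP2herm.eigenvalues)) * S := by
  have hkap' : kap ≠ 0 := ne_of_gt hkap
  have hkad' : kad ≠ 0 := ne_of_gt hkad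
  obtain ⟨p11, hp11⟩ : ∃ x : ℝ, x = (1 + kap) / (2 * kad) + kad / (2 * kap) := ⟨_, rfl⟩
  obtain ⟨p12, hp12⟩ : ∃ x : ℝ, x = 1 / (2 * kap) := ⟨_, rfl⟩
  obtain ⟨p22, hp22⟩ : ∃ x : ℝ, x = (1 + kap) / (2 * kad * kap) := ⟨_, rfl⟩
  rw [← hp11, ← hp12, ← hp22] at hP2
  obtain ⟨av, bv, htrace, hdet, hsupmax, hinfmin⟩ :
      ∃ a b : ℝ, a + b = p11 + p22 ∧ a * b = p11 * p22 - p12 ^ 2 ∧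
        Finset.univ.sup' Finset.univ_nonempty hP2herm.eigenvalues = max a b ∧
        Finset.univ.inf' Finset.univ_nonempty hP2herm.eigenvalues = min a b := by
    refine ⟨hP2herm.eigenvalues 0, hP2herm.eigenvalues 1, ?_, ?_, ?_, ?_⟩
    · have h1 : P2.trace = ∑ i, hP2herm.eigenvalues i := by
        nth_rewrite 1 [hP2herm.spectral_theorem]
        rw [Unitary.conjStarAlgAut_apply, Matrix.trace_mul_cycle]
        have hu : (star (hP2herm.eigenvectorUnitary : Matrix (Fin 2) (Fin 2) ℝ)) *
            (hP2herm.eigenvectorUnitary : Matrix (Fin 2) (Fin 2) ℝ) = 1 :=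
          (Matrix.mem_unitaryGroup_iff').mp (hP2herm.eigenvectorUnitary).2
        rw [hu, one_mul, Matrix.trace_diagonal]
        norm_num
      have h2 : P2.trace = p11 + p22 := by
        rw [hP2, Matrix.trace_fin_two_of]
      rw [h2, Fin.sum_univ_two] at h1
      linarith
    · have h1 : P2.det = hP2herm.eigenvalues 0 * hP2herm.eigenvalues 1 := by
        rw [hP2herm.det_eq_prod_eigenvalues, Fin.prod_univ_two]
        norm_num
      have h2 : P2.det = p11 * p22 - p12 * p12 := by
        rw [hP2, Matrix.det_fin_two_of]
      rw [h2] at h1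
      rw [← h1]; ring
    · refine le_antisymm (Finset.sup'_le _ _ fun i _ => ?_)
        (max_le (Finset.le_sup' _ (Finset.mem_univ 0)) (Finset.le_sup' _ (Finset.mem_univ 1)))
      fin_cases i
      · exact le_max_left _ _
      · exact le_max_right _ _
    · refine le_antisymm
        (le_min (Finset.inf'_le _ (Finset.mem_univ 0)) (Finset.inf'_le _ (Finset.mem_univ 1)))
        (Finset.le_inf' _ _ fun i _ => ?_)
      fin_cases i
      · exact min_le_left _ _
      · exact min_le_right _ _
  obtain ⟨L, hLdef⟩ : ∃ x : ℝ, x = min av bv := ⟨_, rfl⟩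
  obtain ⟨U, hUdef⟩ : ∃ x : ℝ, x = max av bv := ⟨_, rfl⟩
  rw [← hLdef] at hinfmin
  rw [← hUdef] at hsupmax
  have hLU_sum : L + U = p11 + p22 := by rw [hLdef, hUdef, min_add_max]; exact htrace
  have hLU_prod : L * U = p11 * p22 - p12 ^ 2 := by rw [hLdef, hUdef, min_mul_max]; exact hdet
  have hLleU : L ≤ U := by rw [hLdef, hUdef]; exact min_le_max
  -- positivity of trace and determinant
  have hp12pos : 0 < p12 := by rw [hp12]; positivity
  have hp22pos : 0 < p22 := by rw [hp22]; positivity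
  have hp11pos : 0 < p11 := by rw [hp11]; positivity
  have hdetpos : 0 < p11 * p22 - p12 ^ 2 := by
    have h : p11 * p22 - p12 ^ 2 = ((1 + kap) ^ 2 + kad ^ 2) / (4 * kad ^ 2 * kap) := by
      rw [hp11, hp12, hp22]; field_simp; ring
    rw [h]; positivity
  have hTpos : 0 < p11 + p22 := by linarith
  have hLpos : 0 < L := by nlinarith [hLU_sum, hLU_prod, hLleU, hdetpos, hTpos]
  have hUpos : 0 < U := lt_of_lt_of_le hLpos hLleU
  -- quadratic form bounds
  have hlow := aux_quad_low p11 p12 p22 L U hp12pos hLU_sum hLU_prod hLleU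
  have hup := aux_quad_up p11 p12 p22 L U hp12pos hLU_sum hLU_prod hLleU
  -- bound on the forcing
  have hSb : ∀ s : ℝ, 0 ≤ s → |ef s| ≤ S := fun s hs => hS.1 ⟨s, hs, rfl⟩
  have hS0 : 0 ≤ S := le_trans (abs_nonneg _) (hSb 0 le_rfl)
  -- Lyapunov function
  obtain ⟨b2, hb2def⟩ : ∃ x : ℝ, x = p12 ^ 2 + p22 ^ 2 := ⟨_, rfl⟩
  have hb2pos : 0 < b2 := by rw [hb2def]; positivity
  set V : ℝ → ℝ := fun s => p11 * (e s) ^ 2 + 2 * p12 * (e s * ed s) + p22 * (ed s) ^ 2 with hVdef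
  have hV : ∀ s : ℝ, 0 ≤ s →
      HasDerivAt V (-((e s) ^ 2 + (ed s) ^ 2) + 2 * (p12 * e s + p22 * ed s) * ef s) s := by
    intro s hs
    have h1 := he s hs
    have h2 := hed s hs
    have hd : HasDerivAt V
        (p11 * (2 * e s * ed s)
          + 2 * p12 * (ed s * ed s + e s * (-kap * e s - kad * ed s + ef s))
          + p22 * (2 * ed s * (-kap * e s - kad * ed s + ef s))) s := by
      have a1 : HasDerivAt (fun u => p11 * (e u) ^ 2) (p11 * (2 * e s * ed s)) s := by
        have := (h1.pow 2).const_mul p11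
        simpa [mul_comm, mul_assoc, mul_left_comm] using this
      have a2 : HasDerivAt (fun u => 2 * p12 * (e u * ed u))
          (2 * p12 * (ed s * ed s + e s * (-kap * e s - kad * ed s + ef s))) s := by
        have := (h1.mul h2).const_mul (2 * p12)
        simpa [mul_comm, mul_assoc, mul_left_comm] using this
      have a3 : HasDerivAt (fun u => p22 * (ed u) ^ 2)
          (p22 * (2 * ed s * (-kap * e s - kad * ed s + ef s))) s := by
        have := (h2.pow 2).const_mul p22
        simpa [mul_comm, mul_assoc, mul_left_comm] using this
      exact (a1.add a2).add a3
    convert hd using 1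
    rw [hp11, hp12, hp22]
    field_simp
    ring
  -- invariance constant
  obtain ⟨C, hCdef⟩ : ∃ x : ℝ, x = U * (4 * b2 * S ^ 2) := ⟨_, rfl⟩
  have hC0 : 0 ≤ C := by
    rw [hCdef]
    exact mul_nonneg hUpos.le
      (mul_nonneg (mul_nonneg (by norm_num) hb2pos.le) (sq_nonneg S))
  -- derivative is nonpositive when V is large
  have hcond : ∀ s : ℝ, 0 ≤ s → C ≤ V s →
      -((e s) ^ 2 + (ed s) ^ 2) + 2 * (p12 * e s + p22 * ed s) * ef s ≤ 0 := by
    intro s hs hCV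
    obtain ⟨ρ, hρdef⟩ : ∃ x : ℝ, x = (e s) ^ 2 + (ed s) ^ 2 := ⟨_, rfl⟩
    rw [← hρdef]
    have hρ0 : 0 ≤ ρ := by rw [hρdef]; positivity
    have hρbig : 4 * b2 * S ^ 2 ≤ ρ := by
      have h1 : V s ≤ U * ρ := by rw [hρdef]; exact hup (e s) (ed s)
      have h2 : U * (4 * b2 * S ^ 2) ≤ U * ρ := le_trans (hCdef ▸ hCV) h1
      exact le_of_mul_le_mul_left h2 hUpos
    have hcross : 2 * (p12 * e s + p22 * ed s) * ef s ≤ 2 * Real.sqrt (b2 * ρ) * S := by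
      have h1 : (p12 * e s + p22 * ed s) * ef s ≤ |p12 * e s + p22 * ed s| * S := by
        calc (p12 * e s + p22 * ed s) * ef s ≤ |(p12 * e s + p22 * ed s) * ef s| := le_abs_self _
          _ = |p12 * e s + p22 * ed s| * |ef s| := abs_mul _ _
          _ ≤ |p12 * e s + p22 * ed s| * S :=
              mul_le_mul_of_nonneg_left (hSb s hs) (abs_nonneg _)
      have h2 : |p12 * e s + p22 * ed s| ≤ Real.sqrt (b2 * ρ) := by
        rw [← Real.sqrt_sq_eq_abs]
        apply Real.sqrt_le_sqrt
        rw [hb2def, hρdef]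
        nlinarith [sq_nonneg (p12 * ed s - p22 * e s)]
      calc 2 * (p12 * e s + p22 * ed s) * ef s = 2 * ((p12 * e s + p22 * ed s) * ef s) := by ring
        _ ≤ 2 * (|p12 * e s + p22 * ed s| * S) := by linarith
        _ ≤ 2 * (Real.sqrt (b2 * ρ) * S) := by
            have := mul_le_mul_of_nonneg_right h2 hS0
            linarith
        _ = 2 * Real.sqrt (b2 * ρ) * S := by ring
    have hsq : 2 * Real.sqrt (b2 * ρ) * S ≤ ρ := by
      have heq : 2 * Real.sqrt (b2 * ρ) * S = Real.sqrt ((2 * S) ^ 2 * (b2 * ρ)) := by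
        rw [Real.sqrt_mul (by positivity) (b2 * ρ), Real.sqrt_sq (by linarith)]
        ring
      rw [heq]
      have h3 : (2 * S) ^ 2 * (b2 * ρ) ≤ ρ ^ 2 := by nlinarith [hρbig, hρ0, hb2pos.le, sq_nonneg S]
      calc Real.sqrt ((2 * S) ^ 2 * (b2 * ρ)) ≤ Real.sqrt (ρ ^ 2) := Real.sqrt_le_sqrt h3
        _ = ρ := by rw [Real.sqrt_sq hρ0]
    linarith
  -- V 0 = 0
  have hV0 : V 0 = 0 := by rw [hVdef]; simp [he0, hed0]
  -- the invariance argument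
  have hmain : ∀ t : ℝ, 0 ≤ t → V t ≤ C :=
    aux_invariant V _ C hC0 (by rw [hV0]; exact hC0) hV hcond
  -- key eigenvalue inequality
  obtain ⟨M, hMdef⟩ : ∃ x : ℝ, x = max p12 p22 := ⟨_, rfl⟩
  have hMpos : 0 < M := by
    rw [hMdef]; exact lt_of_lt_of_le hp22pos (le_max_right _ _)
  have hp22M : p22 ≤ M := by rw [hMdef]; exact le_max_right _ _
  have hkey : 4 * (L * U) * b2 ≤ p22 ^ 2 * (L + U) ^ 2 := by
    rw [hLU_prod, hLU_sum]
    have h : p22 ^ 2 * (p11 + p22) ^ 2 - 4 * (p11 * p22 - p12 ^ 2) * b2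
        = ((kap - 1) * (kad ^ 2 + (kap + 1) ^ 2)) ^ 2 / (2 * kad * kap) ^ 4 := by
      rw [hb2def, hp11, hp12, hp22]
      field_simp
      ring
    have h2 : (0:ℝ) ≤ ((kap - 1) * (kad ^ 2 + (kap + 1) ^ 2)) ^ 2 / (2 * kad * kap) ^ 4 := by
      positivity
    linarith [h, h2]
  have hb2L : b2 * L ≤ M ^ 2 * U :=
    aux_b2L b2 p22 M L U hb2pos hp22pos hp22M hLpos hLleU hkey
  -- wrap up
  intro t ht
  have hVtC : V t ≤ C := hmain t ht
  have hLρ : L * ((e t) ^ 2 + (ed t) ^ 2) ≤ C := le_trans (hlow (e t) (ed t)) hVtC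
  obtain ⟨m, hmdef⟩ : ∃ x : ℝ, x = max (1 / kap) ((1 + kap) / (kad * kap)) := ⟨_, rfl⟩
  have hm2M : m = 2 * M := by
    rw [hmdef, hMdef, hp12, hp22]
    rcases le_total (1 / (2 * kap)) ((1 + kap) / (2 * kad * kap)) with h | h
    · rw [max_eq_right h, max_eq_right]
      · field_simp
      · rw [div_le_div_iff₀ (by positivity) (by positivity)] at h ⊢
        nlinarith [h]
    · rw [max_eq_left h, max_eq_left]
      · field_simp
      · rw [div_le_div_iff₀ (by positivity) (by positivity)] at h ⊢
        nlinarith [h]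
  rw [hsupmax, hinfmin, ← hmdef]
  exact aux_fin L U C b2 M m S _ hLpos hUpos hS0 hMpos hm2M hCdef hb2L hLρ
    (by positivity)
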